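/- arXiv:2107.04645 — 5 statements merged into one kernel-verified Lean document; each statement's English description precedes it below -/
import Mathlib

section
/- Let K be a finite group, h ∈ H a nontrivial single cycle, γ₀ ∈ supp(h), and x ∈ K. Then the number of wreath cycles with top component h and yade x at γ₀ equals |K|^{|h|-1}, where |h| is the order (= cycle length) of h. -/
set_option linter.unusedSectionVars false

/-- The wreath product `K ≀_Γ Sym(Γ)` (with right-action conventions from the paper):
multiplication `(f,h)(e,g) = (f · e^{h⁻¹}, hg)` where `[γ](f·e^{h⁻¹}) = [γ]f * [γ^h]e`. -/
structure Wr (K : Type*) (Γ : Type*) where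
  base : Γ → K
  top : Equiv.Perm Γ

namespace Wr

variable {K Γ : Type*} [Group K]

theorem ext' {w v : Wr K Γ} (h1 : w.base = v.base) (h2 : w.top = v.top) : w = v := by
  cases w; cases v; cases h1; cases h2; rfl

instance : Group (Wr K Γ) where
  mul w v := ⟨fun γ => w.base γ * v.base (w.top γ), w.top.trans v.top⟩
  one := ⟨fun _ => 1, 1⟩
  inv w := ⟨fun γ => (w.base (w.top⁻¹ γ))⁻¹, w.top⁻¹⟩
  mul_assoc a b c := ext' (funext fun γ => mul_assoc _ _ _) (Equiv.trans_assoc _ _ _)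
  one_mul a := ext' (funext fun γ => one_mul _) (Equiv.refl_trans _)
  mul_one a := ext' (funext fun γ => mul_one _) (Equiv.trans_refl _)
  inv_mul_cancel a := ext' (funext fun γ => inv_mul_cancel _) (Equiv.symm_trans_self _)

/-- The support of a permutation, as a set. -/
def psupp (h : Equiv.Perm Γ) : Set Γ := {γ | h γ ≠ γ}

/-- The territory of a wreath product element. -/
def terr (w : Wr K Γ) : Set Γ := psupp w.top ∪ {γ | w.base γ ≠ 1}

/-- Wreath cycles: either trivial top and a singleton territory, or the top is a
single nontrivial cycle and the territory equals its support. -/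
def IsWreathCycle (w : Wr K Γ) : Prop :=
  (w.top = 1 ∧ ∃ γ₀, terr w = {γ₀}) ∨ (w.top.IsCycle ∧ terr w = psupp w.top)

/-- The yade of `w` at `γ`: the ordered product `∏_{i=0}^{|h|-1} [γ^{h^i}]f`. -/
noncomputable def yade (w : Wr K Γ) (γ : Γ) : K :=
  ((List.range (orderOf w.top)).map fun i => w.base ((w.top ^ i) γ)).prod

end Wr

open Wr

theorem card_fixed_prod {G : Type*} [Group G] [Fintype G] (m : ℕ) (x : G) :
    Nat.card {g : Fin (m+1) → G // (List.ofFn g).prod = x} = Fintype.card G ^ m := by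
  classical
  have e : {g : Fin (m+1) → G // (List.ofFn g).prod = x} ≃ (Fin m → G) := {
    toFun := fun g i => g.1 i.castSucc
    invFun := fun t => ⟨Fin.snoc t ((List.ofFn t).prod⁻¹ * x), by
      rw [List.ofFn_succ']
      simp only [Fin.snoc_castSucc, Fin.snoc_last, List.concat_eq_append,
        List.prod_append, List.prod_cons, List.prod_nil, mul_one]
      rw [mul_inv_cancel_left]⟩
    left_inv := by
      rintro ⟨g, hg⟩
      ext i
      refine Fin.lastCases ?_ (fun j => ?_) i
      · simp only [Fin.snoc_last]
        rw [List.ofFn_succ'] at hg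
        simp only [List.concat_eq_append, List.prod_append, List.prod_cons,
          List.prod_nil, mul_one] at hg
        exact (eq_inv_mul_iff_mul_eq.2 hg).symm
      · simp [Fin.snoc_castSucc]
    right_inv := by
      intro t; ext j; simp [Fin.snoc_castSucc] }
  rw [Nat.card_congr e, Nat.card_eq_fintype_card, Fintype.card_fun, Fintype.card_fin]

/-- for finite `K`, the number of wreath cycles with top component `h`
and yade `x` at `γ₀` equals `|K|^{|h|-1}`. -/
theorem card_wreathCycles_fixed_yade {K Γ : Type*} [Group K] [Fintype K] [Fintype Γ]
    (H : Subgroup (Equiv.Perm Γ)) (h : Equiv.Perm Γ) (hH : h ∈ H)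
    (hc : h.IsCycle) (γ₀ : Γ) (hγ₀ : h γ₀ ≠ γ₀) (x : K) :
    {w : Wr K Γ | IsWreathCycle w ∧ w.top = h ∧ yade w γ₀ = x}.ncard =
      Fintype.card K ^ (orderOf h - 1) := by
  classical
  set n := orderOf h with hn
  have hnpos : 0 < n := orderOf_pos h
  have hns : n = h.support.card := hc.orderOf
  have hcyc : h.IsCycleOn ↑h.support := by
    rw [Equiv.Perm.coe_support_eq_set_support]; exact hc.isCycleOn
  have hγ₀s : γ₀ ∈ h.support := Equiv.Perm.mem_support.2 hγ₀
  set ι : Fin n → Γ := fun i => (h ^ (i : ℕ)) γ₀ with hι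
  have hιmem : ∀ i, ι i ∈ h.support := by
    intro i
    rw [Equiv.Perm.mem_support]
    have hcomm : h ((h ^ (i : ℕ)) γ₀) = (h ^ (i : ℕ)) (h γ₀) := by
      rw [← Equiv.Perm.mul_apply, ← Equiv.Perm.mul_apply, ← pow_succ, ← pow_succ']
    intro hfix
    rw [hι] at hfix
    simp only at hfix
    rw [hcomm] at hfix
    exact hγ₀ ((h ^ (i : ℕ)).injective hfix)
  have hιinj : Function.Injective ι := by
    intro i j hij
    have hmod := (hcyc.pow_apply_eq_pow_apply hγ₀s).1 hij
    unfold Nat.ModEq at hmod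
    have hi : (i : ℕ) < h.support.card := hns ▸ i.2
    have hj : (j : ℕ) < h.support.card := hns ▸ j.2
    apply Fin.ext
    rwa [Nat.mod_eq_of_lt hi, Nat.mod_eq_of_lt hj] at hmod
  have hιsurj : ∀ γ ∈ h.support, ∃ i : Fin n, ι i = γ := by
    intro γ hγ
    obtain ⟨k, hk, hkγ⟩ := hcyc.exists_pow_eq hγ₀s hγ
    exact ⟨⟨k, hns ▸ hk⟩, hkγ⟩
  have yade_eq : ∀ w : Wr K Γ, w.top = h →
      yade w γ₀ = (List.ofFn fun i : Fin n => w.base (ι i)).prod := by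
    intro w hw
    unfold yade
    rw [hw, List.ofFn_eq_map, ← List.map_coe_finRange_eq_range, List.map_map]
    rfl
  have memS : ∀ w : Wr K Γ,
      (IsWreathCycle w ∧ w.top = h ∧ yade w γ₀ = x) ↔
      (w.top = h ∧ (∀ γ, h γ = γ → w.base γ = 1) ∧
        (List.ofFn fun i : Fin n => w.base (ι i)).prod = x) := by
    intro w
    constructor
    · rintro ⟨hwc, hw, hy⟩
      refine ⟨hw, ?_, by rw [← yade_eq w hw]; exact hy⟩
      rcases hwc with ⟨h1, _⟩ | ⟨_, hterr⟩
      · exact absurd (hw ▸ h1) hc.ne_one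
      · intro γ hγ
        by_contra hb
        have : γ ∈ terr w := Or.inr hb
        rw [hterr, hw] at this
        exact this hγ
    · rintro ⟨hw, hvan, hy⟩
      refine ⟨Or.inr ⟨hw ▸ hc, ?_⟩, hw, by rw [yade_eq w hw]; exact hy⟩
      apply Set.union_eq_left.2
      intro γ hγ
      rw [hw]
      intro heq
      exact hγ (hvan γ heq)
  have base_eq : ∀ (g : Fin n → K) (i : Fin n),
      (if hγ : ∃ j, ι j = ι i then g hγ.choose else 1) = g i := by
    intro g i
    have hex : ∃ j, ι j = ι i := ⟨i, rfl⟩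
    rw [dif_pos hex]
    congr 1
    exact hιinj hex.choose_spec
  have key : Nat.card ({w : Wr K Γ | IsWreathCycle w ∧ w.top = h ∧ yade w γ₀ = x}) =
      Nat.card {g : Fin n → K // (List.ofFn g).prod = x} := by
    apply Nat.card_congr
    refine { toFun := fun w => ⟨fun i => w.1.base (ι i), ((memS w.1).1 w.2).2.2⟩,
             invFun := fun g =>
               ⟨⟨fun γ => if hγ : ∃ j, ι j = γ then g.1 hγ.choose else 1, h⟩, ?_⟩,
             left_inv := ?_, right_inv := ?_ }
    · apply (memS _).2
      refine ⟨rfl, ?_, ?_⟩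
      · intro γ hγ
        have : ¬ ∃ j, ι j = γ := by
          rintro ⟨j, rfl⟩
          exact Equiv.Perm.mem_support.1 (hιmem j) hγ
        simp only [dif_neg this]
      · simp only
        have : (fun i : Fin n => if hγ : ∃ j, ι j = ι i then g.1 hγ.choose else 1) = g.1 :=
          funext fun i => base_eq g.1 i
        rw [this]
        exact g.2
    · rintro ⟨w, hw⟩
      obtain ⟨hwt, hvan, _⟩ := (memS w).1 hw
      apply Subtype.ext
      apply ext'
      · funext γ
        simp only
        by_cases hγ : ∃ j, ι j = γ
        · rw [dif_pos hγ]
          rw [hγ.choose_spec]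
        · rw [dif_neg hγ]
          have : γ ∉ h.support := fun hmem => hγ (hιsurj γ hmem)
          exact (hvan γ (not_not.1 (fun hne => this (Equiv.Perm.mem_support.2 hne)))).symm
      · exact hwt.symm
    · intro g
      apply Subtype.ext
      funext i
      exact base_eq g.1 i
  rw [← Nat.card_coe_set_eq, key]
  obtain ⟨m, hm⟩ : ∃ m, n = m + 1 := ⟨n - 1, (Nat.succ_pred_eq_of_pos hnpos).symm⟩
  rw [hm, Nat.add_sub_cancel]
  exact card_fixed_prod m x
end

section
/- Let K be finite, 1 ≠ h ∈ H a single cycle, γ ∈ supp(h), and P ⊆ K. Then the proportion of wreath cycles w with top component h whose yade at γ lies in P equals |P|/|K|: |{w ∈ C(W,h) : [γ,w]Yade ∈ P}| / |C(W,h)| = |P|/|K|. -/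
set_option linter.unusedSectionVars false

open Wr

section Aux

variable {K Γ : Type*} [Group K] [DecidableEq Γ]

/-- Modify the base at `h⁻¹ γ` by right multiplication with `k`. -/
noncomputable def wact (h : Equiv.Perm Γ) (γ : Γ) (k : K) (w : Wr K Γ) : Wr K Γ :=
  ⟨fun δ => if δ = h⁻¹ γ then w.base δ * k else w.base δ, w.top⟩

theorem wact_wact (h : Equiv.Perm Γ) (γ : Γ) (k k' : K) (w : Wr K Γ) :
    wact h γ k (wact h γ k' w) = wact h γ (k' * k) w := by
  refine ext' (funext fun δ => ?_) rfl
  simp only [wact]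
  by_cases hd : δ = h⁻¹ γ
  · simp only [if_pos hd, mul_assoc]
  · simp only [if_neg hd]

theorem wact_one (h : Equiv.Perm Γ) (γ : Γ) (w : Wr K Γ) : wact h γ (1 : K) w = w := by
  refine ext' (funext fun δ => ?_) rfl
  simp [wact]

theorem mem_psupp_inv {h : Equiv.Perm Γ} {γ : Γ} (hγ : h γ ≠ γ) : h⁻¹ γ ∈ psupp h := by
  simp only [psupp, Set.mem_setOf_eq, Equiv.Perm.inv_def, Equiv.apply_symm_apply]
  intro hcontra
  apply hγ
  conv_lhs => rw [hcontra]
  simp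

theorem wact_isWreathCycle {h : Equiv.Perm Γ} {γ : Γ} (hγ : h γ ≠ γ) (k : K) {w : Wr K Γ}
    (hw : IsWreathCycle w) (ht : w.top = h) : IsWreathCycle (wact h γ k w) := by
  rcases hw with ⟨h1, -⟩ | ⟨hcyc, hterr⟩
  · exact absurd (by rw [← ht, h1]; simp) hγ
  · refine Or.inr ⟨hcyc, ?_⟩
    have htop : (wact h γ k w).top = w.top := rfl
    rw [terr, htop]
    rw [terr] at hterr
    apply Set.Subset.antisymm
    · apply Set.union_subset Set.Subset.rfl
      intro δ hδ
      simp only [Set.mem_setOf_eq, wact] at hδ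
      by_cases hd : δ = h⁻¹ γ
      · rw [hd, ht]; exact mem_psupp_inv hγ
      · rw [if_neg hd] at hδ
        rw [← hterr]
        exact Set.mem_union_right _ hδ
    · exact Set.subset_union_left

variable [Fintype Γ]

theorem yade_wact {h : Equiv.Perm Γ} {γ : Γ} (hc : h.IsCycle) (hγ : h γ ≠ γ) (k : K)
    (w : Wr K Γ) (ht : w.top = h) : yade (wact h γ k w) γ = yade w γ * k := by
  obtain ⟨m, hm⟩ : ∃ m, orderOf h = m + 1 := by
    have : orderOf h ≠ 0 := (orderOf_pos h).ne'
    exact ⟨orderOf h - 1, by omega⟩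
  have hpow_m : (h ^ m) γ = h⁻¹ γ := by
    have h1 : h ^ (m + 1) = 1 := by rw [← hm]; exact pow_orderOf_eq_one h
    have : h ^ m = h⁻¹ := by
      rw [eq_inv_iff_mul_eq_one, ← pow_succ]; exact h1
    rw [this]
  have hne : ∀ i < m, (h ^ i) γ ≠ h⁻¹ γ := by
    intro i hi hcontra
    have : (h ^ (i + 1)) γ = γ := by
      rw [pow_succ', Equiv.Perm.mul_apply, hcontra]
      simp
    have h1 : h ^ (i + 1) = 1 := (hc.pow_eq_one_iff' hγ).mpr this
    have := orderOf_dvd_of_pow_eq_one h1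
    rw [hm] at this
    have := Nat.le_of_dvd (by omega) this
    omega
  have htop : (wact h γ k w).top = w.top := rfl
  simp only [yade, htop, ht, hm, List.range_succ, List.map_append, List.prod_append,
    List.map_cons, List.map_nil, List.prod_cons, List.prod_nil, mul_one]
  have hcong : ((List.range m).map fun i => (wact h γ k w).base ((h ^ i) γ)) =
      (List.range m).map fun i => w.base ((h ^ i) γ) := by
    apply List.map_congr_left
    intro i hi
    rw [List.mem_range] at hi
    simp only [wact, if_neg (hne i hi)]
  rw [hcong, hpow_m]
  simp [wact, mul_assoc]

end Aux

/-- the proportion of wreath cycles with top component `h` whose yade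
at `γ` lies in `P` is `|P|/|K|` (stated multiplicatively). -/
theorem proportion_yade_mem {K Γ : Type*} [Group K] [Fintype K] [Fintype Γ]
    (H : Subgroup (Equiv.Perm Γ)) (h : Equiv.Perm Γ) (hH : h ∈ H)
    (hc : h.IsCycle) (γ : Γ) (hγ : h γ ≠ γ) (P : Set K) :
    {w : Wr K Γ | IsWreathCycle w ∧ w.top = h ∧ yade w γ ∈ P}.ncard *
        Fintype.card K =
      P.ncard * {w : Wr K Γ | IsWreathCycle w ∧ w.top = h}.ncard := by
  classical
  set A := {w : Wr K Γ | IsWreathCycle w ∧ w.top = h ∧ yade w γ ∈ P} with hA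
  set C := {w : Wr K Γ | IsWreathCycle w ∧ w.top = h} with hC
  have top_wact : ∀ (k : K) (w : Wr K Γ), (wact h γ k w).top = w.top := fun _ _ => rfl
  have e : (↥A × K) ≃ (↥P × ↥C) := by
    refine
      { toFun := fun x =>
          (⟨yade (x.1 : Wr K Γ) γ, x.1.2.2.2⟩,
           ⟨wact h γ ((yade (x.1 : Wr K Γ) γ)⁻¹ * x.2) (x.1 : Wr K Γ), ?_, ?_⟩),
        invFun := fun x =>
          (⟨wact h γ ((yade (x.2 : Wr K Γ) γ)⁻¹ * (x.1 : K)) (x.2 : Wr K Γ),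
            ?_, ?_, ?_⟩, yade (x.2 : Wr K Γ) γ),
        left_inv := ?_, right_inv := ?_ }
    · exact wact_isWreathCycle hγ _ x.1.2.1 x.1.2.2.1
    · rw [top_wact]; exact x.1.2.2.1
    · exact wact_isWreathCycle hγ _ x.2.2.1 x.2.2.2
    · rw [top_wact]; exact x.2.2.2
    · rw [yade_wact hc hγ _ _ x.2.2.2, ← mul_assoc, mul_inv_cancel, one_mul]
      exact x.1.2
    · rintro ⟨⟨w, hw⟩, k⟩
      have hy : yade (wact h γ ((yade w γ)⁻¹ * k) w) γ = k := by
        rw [yade_wact hc hγ _ _ hw.2.1]; group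
      refine Prod.ext (Subtype.ext ?_) ?_
      · simp only
        rw [hy, wact_wact]
        convert wact_one h γ w using 2
        group
      · simpa using hy
    · rintro ⟨⟨p, hp⟩, ⟨v, hv⟩⟩
      have hy : yade (wact h γ ((yade v γ)⁻¹ * p) v) γ = p := by
        rw [yade_wact hc hγ _ _ hv.2]; group
      refine Prod.ext (Subtype.ext ?_) (Subtype.ext ?_)
      · simpa using hy
      · simp only
        rw [hy, wact_wact]
        convert wact_one h γ v using 2
        group
  calc A.ncard * Fintype.card K = Nat.card (↥A × K) := by
        rw [Nat.card_prod, Nat.card_coe_set_eq, Nat.card_eq_fintype_card]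
    _ = Nat.card (↥P × ↥C) := Nat.card_congr e
    _ = P.ncard * C.ncard := by
        rw [Nat.card_prod, Nat.card_coe_set_eq, Nat.card_coe_set_eq]
end

section
/- Let w = (f,h) ∈ S = K ≀_Γ Sym(Γ) be a wreath cycle with h ≠ 1 and γ₀ ∈ terr(w). Then the map (h^t, x, d) ↦ ([h^t, γ₀^t, x, d^t]B, h^t) is a bijection from h^H × ([γ₀,w]Yade)^K × K^{terr(w)\{γ₀}} onto the conjugacy class w^W of w in W = K ≀_Γ H. In particular, if K and H are finite, |w^W| = |h^H| · |([γ₀,w]Yade)^K| · |K|^{|h|-1}. -/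
set_option linter.unusedSectionVars false

open Wr

namespace Wr

variable {K Γ : Type*} [Group K] [DecidableEq Γ]

/-- The map `B`: given a cycle `h`, a point `γ₀` of its support, a prescribed yade `x`
and `d ∈ K^{supp(h)\{γ₀}}`, produce the base component sending `γ₀` to
`x · ([γ₀^{h^{|h|-1}}]d)⁻¹ ⋯ ([γ₀^h]d)⁻¹`, each `γ ∈ supp(h)\{γ₀}` to `[γ]d`,
and everything else to `1`. -/
noncomputable def Bmap (h : Equiv.Perm Γ) (γ₀ : Γ) (x : K) (d : Γ → K) : Γ → K :=
  fun γ =>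
    if γ = γ₀ then
      x * (((List.range (orderOf h - 1)).map fun i => d ((h ^ (i + 1)) γ₀)).prod)⁻¹
    else if h γ ≠ γ then d γ else 1

end Wr

theorem Equiv.Perm.apply_inv_self {α : Type*} (f : Equiv.Perm α) (x : α) : f (f⁻¹ x) = x :=
  f.apply_symm_apply x

theorem Equiv.Perm.inv_apply_self {α : Type*} (f : Equiv.Perm α) (x : α) : f⁻¹ (f x) = x :=
  f.symm_apply_apply x

section Helpers

namespace Wr

variable {K Γ : Type*} [Group K]

lemma mul_base' (u v : Wr K Γ) : (u * v).base = fun γ => u.base γ * v.base (u.top γ) := rfl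
lemma mul_top' (u v : Wr K Γ) : (u * v).top = u.top.trans v.top := rfl
lemma inv_base' (u : Wr K Γ) : (u⁻¹).base = fun γ => (u.base (u.top⁻¹ γ))⁻¹ := rfl
lemma inv_top' (u : Wr K Γ) : (u⁻¹).top = u.top⁻¹ := rfl

lemma conj_top (u a : Wr K Γ) : (a⁻¹ * u * a).top = a.top * u.top * a.top⁻¹ := by
  ext γ
  simp [mul_top', inv_top', Equiv.Perm.mul_apply]

lemma conj_base (u a : Wr K Γ) (γ : Γ) :
    (a⁻¹ * u * a).base γ
      = (a.base (a.top⁻¹ γ))⁻¹ * u.base (a.top⁻¹ γ) * a.base (u.top (a.top⁻¹ γ)) := rfl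

lemma telescope (c b : ℕ → K) (n : ℕ) :
    ((List.range n).map fun i => (c i)⁻¹ * b i * c (i + 1)).prod
      = (c 0)⁻¹ * ((List.range n).map b).prod * c n := by
  induction n with
  | zero => simp
  | succ n ih =>
      rw [List.range_succ, List.map_append, List.prod_append, ih,
        List.map_append, List.prod_append]
      simp [mul_assoc]

lemma shift_prod (b : ℕ → K) (n : ℕ) :
    b 0 * ((List.range n).map fun i => b (i + 1)).prod
      = ((List.range n).map b).prod * b n := by
  induction n with
  | zero => simp
  | succ n ih =>
      rw [List.range_succ, List.map_append, List.prod_append,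
        List.map_append, List.prod_append, ← mul_assoc, ih, mul_assoc, mul_assoc]
      simp

lemma head_prod (b : ℕ → K) (n : ℕ) (hn : n ≠ 0) :
    ((List.range n).map b).prod
      = b 0 * ((List.range (n - 1)).map fun i => b (i + 1)).prod := by
  obtain ⟨m, rfl⟩ := Nat.exists_eq_succ_of_ne_zero hn
  simp [List.range_succ_eq_map, Function.comp_def]

end Wr

end Helpers
section Helpers2

namespace Wr

variable {K Γ : Type*} [Group K]

lemma conj_top_pow (w a : Wr K Γ) (i : ℕ) :
    ((a⁻¹ * w * a).top ^ i) = a.top * w.top ^ i * a.top⁻¹ := by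
  rw [conj_top, conj_pow]

lemma orderOf_conj_top (w a : Wr K Γ) : orderOf (a⁻¹ * w * a).top = orderOf w.top := by
  have h : SemiconjBy a.top w.top (a⁻¹ * w * a).top := by
    rw [conj_top]; unfold SemiconjBy; group
  exact (h.orderOf_eq a.top).symm

lemma yade_conj (w a : Wr K Γ) (γ : Γ) :
    yade (a⁻¹ * w * a) (a.top γ) = (a.base γ)⁻¹ * yade w γ * a.base γ := by
  set v := a⁻¹ * w * a with hv
  have hord : orderOf v.top = orderOf w.top := orderOf_conj_top w a
  have hterm : (fun i => v.base ((v.top ^ i) (a.top γ)))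
      = fun i => (a.base ((w.top ^ i) γ))⁻¹ * w.base ((w.top ^ i) γ)
          * a.base ((w.top ^ (i + 1)) γ) := by
    funext i
    have h1 : (v.top ^ i) (a.top γ) = a.top ((w.top ^ i) γ) := by
      rw [hv, conj_top_pow]; simp [Equiv.Perm.mul_apply]
    rw [h1, hv, conj_base]
    simp [Equiv.Perm.mul_apply, pow_succ', Equiv.Perm.inv_apply_self]
  rw [yade, hterm, telescope, hord]
  have h2 : (w.top ^ orderOf w.top) γ = γ := by
    rw [pow_orderOf_eq_one]; rfl
  rw [h2]
  simp [yade]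

lemma yade_shift (v : Wr K Γ) (γ : Γ) :
    yade v (v.top γ) = (v.base γ)⁻¹ * yade v γ * v.base γ := by
  set n := orderOf v.top with hn
  set b : ℕ → K := fun i => v.base ((v.top ^ i) γ) with hb
  have h1 : yade v (v.top γ) = ((List.range n).map fun i => b (i + 1)).prod := by
    rw [yade, ← hn]
    congr 1
  have h2 : b n = b 0 := by
    simp [hb, hn, pow_orderOf_eq_one]
  have h3 := shift_prod b n
  rw [h2] at h3
  have h4 : yade v γ = ((List.range n).map b).prod := rfl
  have hb0 : v.base γ = b 0 := by simp [hb]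
  rw [h1, h4, hb0, mul_assoc, ← h3, inv_mul_cancel_left]

lemma yade_isConj_shift (v : Wr K Γ) (γ : Γ) :
    IsConj (yade v γ) (yade v (v.top γ)) := by
  rw [isConj_iff]
  exact ⟨(v.base γ)⁻¹, by rw [yade_shift]; group⟩

lemma yade_isConj_pow (v : Wr K Γ) (γ : Γ) (m : ℕ) :
    IsConj (yade v γ) (yade v ((v.top ^ m) γ)) := by
  induction m with
  | zero =>
      have h0 : ((v.top ^ 0) γ) = γ := by simp
      rw [h0]
  | succ m ih =>
      have : (v.top ^ (m + 1)) γ = v.top ((v.top ^ m) γ) := by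
        simp [pow_succ', Equiv.Perm.mul_apply]
      rw [this]
      exact ih.trans (yade_isConj_shift v _)

end Wr

end Helpers2
section Helpers3

namespace Wr

variable {K Γ : Type*} [Group K] [Fintype Γ]

lemma apply_pow_ne {h : Equiv.Perm Γ} {γ : Γ} (hγ : h γ ≠ γ) (i : ℕ) :
    h ((h ^ i) γ) ≠ (h ^ i) γ := by
  intro hc
  apply hγ
  have e1 : (h ^ i) (h γ) = h ((h ^ i) γ) := by
    rw [← Equiv.Perm.mul_apply, ← pow_succ, pow_succ', Equiv.Perm.mul_apply]
  rw [hc] at e1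
  exact (h ^ i).injective e1

lemma pow_ne_self {h : Equiv.Perm Γ} (hcyc : h.IsCycle) {γ₀ : Γ} (hγ₀ : h γ₀ ≠ γ₀)
    {i : ℕ} (h0 : 0 < i) (hi : i < orderOf h) : (h ^ i) γ₀ ≠ γ₀ := by
  intro hfix
  have h1 : h ^ i = 1 := (hcyc.pow_eq_one_iff' hγ₀).2 hfix
  have h2 : orderOf h ∣ i := orderOf_dvd_of_pow_eq_one h1
  exact absurd (Nat.le_of_dvd h0 h2) (not_le.2 hi)

lemma pow_uniq_aux {h : Equiv.Perm Γ} (hcyc : h.IsCycle) {γ₀ : Γ} (hγ₀ : h γ₀ ≠ γ₀)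
    {i j : ℕ} (hlt : i < j) (hj : j < orderOf h)
    (hij : (h ^ i) γ₀ = (h ^ j) γ₀) : False := by
  have h1 : (h ^ i) ((h ^ (j - i)) γ₀) = (h ^ i) γ₀ := by
    rw [← Equiv.Perm.mul_apply, ← pow_add, Nat.add_sub_cancel' hlt.le, ← hij]
  have h2 : (h ^ (j - i)) γ₀ = γ₀ := (h ^ i).injective h1
  exact pow_ne_self hcyc hγ₀ (Nat.sub_pos_of_lt hlt)
    (lt_of_le_of_lt (Nat.sub_le _ _) hj) h2

lemma pow_uniq {h : Equiv.Perm Γ} (hcyc : h.IsCycle) {γ₀ : Γ} (hγ₀ : h γ₀ ≠ γ₀)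
    {i j : ℕ} (hi : i < orderOf h) (hj : j < orderOf h)
    (hij : (h ^ i) γ₀ = (h ^ j) γ₀) : i = j := by
  rcases Nat.lt_trichotomy i j with hlt | heq | hgt
  · exact absurd (pow_uniq_aux hcyc hγ₀ hlt hj hij) not_false
  · exact heq
  · exact absurd (pow_uniq_aux hcyc hγ₀ hgt hi hij.symm) not_false

lemma exists_pow_lt {h : Equiv.Perm Γ} (hcyc : h.IsCycle) {γ₀ δ : Γ}
    (hγ₀ : h γ₀ ≠ γ₀) (hδ : h δ ≠ δ) :
    ∃ i, i < orderOf h ∧ (h ^ i) γ₀ = δ := by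
  obtain ⟨i, hi⟩ := hcyc.exists_pow_eq hγ₀ hδ
  exact ⟨i % orderOf h, Nat.mod_lt _ (orderOf_pos h), by rw [pow_mod_orderOf]; exact hi⟩

end Wr

end Helpers3
section Helpers4

namespace Wr

variable {K Γ : Type*} [Group K] [Fintype Γ]

/-- Sufficient condition for membership in the conjugacy class:
construct the conjugating base function. -/
lemma construct (w : Wr K Γ) (hcyc : w.top.IsCycle)
    (hf1 : ∀ δ, w.top δ = δ → w.base δ = 1)
    (γ₀ : Γ) (hγ₀ : w.top γ₀ ≠ γ₀)
    (v : Wr K Γ) (t : Equiv.Perm Γ) (htop : v.top = t * w.top * t⁻¹)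
    (hv1 : ∀ δ, w.top δ = δ → v.base (t δ) = 1)
    (c : K) (hc : c⁻¹ * yade w γ₀ * c = yade v (t γ₀)) :
    ∃ e : Γ → K, (Wr.mk e t)⁻¹ * w * (Wr.mk e t) = v := by
  classical
  set h := w.top with hh
  set n := orderOf h with hn
  have hnpos : 0 < n := orderOf_pos h
  set fb : ℕ → K := fun j => w.base ((h ^ j) γ₀) with hfb
  set vb : ℕ → K := fun j => v.base (t ((h ^ j) γ₀)) with hvb
  set E : ℕ → K := fun i =>
    (((List.range i).map fb).prod)⁻¹ * c * ((List.range i).map vb).prod with hE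
  have hE0 : E 0 = c := by simp [hE]
  have hEsucc : ∀ i, E (i + 1) = (fb i)⁻¹ * E i * vb i := by
    intro i
    simp only [hE, List.range_succ, List.map_append, List.prod_append,
      List.map_cons, List.map_nil, List.prod_cons, List.prod_nil]
    group
  have hex : ∀ δ, h δ ≠ δ → ∃ i, i < n ∧ (h ^ i) γ₀ = δ := fun δ hδ =>
    exists_pow_lt hcyc hγ₀ hδ
  set e : Γ → K := fun δ => if hδ : h δ ≠ δ then E (Nat.find (hex δ hδ)) else 1 with he
  have edef : ∀ δ (hδ : h δ ≠ δ), e δ = E (Nat.find (hex δ hδ)) :=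
    fun δ hδ => dif_pos hδ
  have edef0 : ∀ δ, h δ = δ → e δ = 1 := fun δ hδ => dif_neg (by simp [hδ])
  have heval : ∀ i, i < n → e ((h ^ i) γ₀) = E i := by
    intro i hi
    have hδ : h ((h ^ i) γ₀) ≠ (h ^ i) γ₀ := apply_pow_ne hγ₀ i
    rw [edef _ hδ]
    congr 1
    have hspec := Nat.find_spec (hex _ hδ)
    exact pow_uniq hcyc hγ₀ hspec.1 hi hspec.2
  -- the order of the conjugated top
  have hordv : orderOf v.top = n := by
    rw [htop]
    have hsc : SemiconjBy t h (t * h * t⁻¹) := by unfold SemiconjBy; group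
    exact (hsc.orderOf_eq t).symm
  have hvpow : ∀ j : ℕ, (v.top ^ j) (t γ₀) = t ((h ^ j) γ₀) := by
    intro j
    rw [htop, conj_pow]
    simp [Equiv.Perm.mul_apply]
  have hyv : yade v (t γ₀) = ((List.range n).map vb).prod := by
    rw [yade, hordv]
    refine congrArg List.prod (List.map_congr_left fun j _ => ?_)
    rw [hvb]
    simp [hvpow j]
  have hyw : yade w γ₀ = ((List.range n).map fb).prod := rfl
  -- key pointwise identity
  have key : ∀ δ, (e δ)⁻¹ * w.base δ * e (h δ) = v.base (t δ) := by
    intro δ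
    by_cases hδ : h δ = δ
    · rw [edef0 δ hδ, hδ, edef0 δ hδ, hf1 δ hδ, hv1 δ hδ]
      simp
    · obtain ⟨i, hi, rfl⟩ := hex δ hδ
      have hstep : h ((h ^ i) γ₀) = (h ^ (i + 1)) γ₀ := by
        rw [pow_succ', Equiv.Perm.mul_apply]
      rw [hstep, heval i hi]
      by_cases hi1 : i + 1 < n
      · rw [heval (i + 1) hi1, hEsucc i,
          show w.base ((h ^ i) γ₀) = fb i from rfl,
          show v.base (t ((h ^ i) γ₀)) = vb i from rfl]
        group
      · have hin : i + 1 = n := by omega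
        have hfix : (h ^ (i + 1)) γ₀ = γ₀ := by
          rw [hin, hn, pow_orderOf_eq_one]; rfl
        rw [hfix]
        have he0 : e γ₀ = E 0 := by
          have h00 : (h ^ 0) γ₀ = γ₀ := by simp
          have := heval 0 hnpos
          rwa [h00] at this
        rw [he0, hE0]
        -- use the yade relation
        rw [hyv, hyw, ← hin] at hc
        simp only [List.range_succ, List.map_append, List.prod_append,
          List.map_cons, List.map_nil, List.prod_cons, List.prod_nil] at hc
        have hre : vb i = (((List.range i).map vb).prod)⁻¹ *
            (c⁻¹ * (((List.range i).map fb).prod * (fb i * 1)) * c) := by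
          rw [hc]; group
        rw [show w.base ((h ^ i) γ₀) = fb i from rfl,
          show v.base (t ((h ^ i) γ₀)) = vb i from rfl, hre, hE]
        dsimp only
        group
  refine ⟨e, ?_⟩
  apply ext'
  · funext γ
    rw [conj_base]
    have h1 : (Wr.mk e t).base = e := rfl
    have h2 : (Wr.mk e t).top = t := rfl
    rw [h1, h2]
    have := key (t⁻¹ γ)
    rw [Equiv.Perm.apply_inv_self] at this
    exact this
  · rw [conj_top, htop]

end Wr

end Helpers4
section Helpers5

namespace Wr

variable {K Γ : Type*} [Group K] [DecidableEq Γ]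

lemma Bmap_apply_self (g : Equiv.Perm Γ) (γ₀ : Γ) (x : K) (d : Γ → K) :
    Bmap g γ₀ x d γ₀ =
      x * (((List.range (orderOf g - 1)).map fun i => d ((g ^ (i + 1)) γ₀)).prod)⁻¹ :=
  if_pos rfl

lemma Bmap_apply_move {g : Equiv.Perm Γ} {γ₀ γ : Γ} (x : K) (d : Γ → K)
    (hne : γ ≠ γ₀) (hmove : g γ ≠ γ) : Bmap g γ₀ x d γ = d γ := by
  unfold Bmap
  rw [if_neg hne, if_pos hmove]

lemma Bmap_apply_fix {g : Equiv.Perm Γ} {γ₀ γ : Γ} (x : K) (d : Γ → K)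
    (hne : γ ≠ γ₀) (hfix : g γ = γ) : Bmap g γ₀ x d γ = 1 := by
  unfold Bmap
  rw [if_neg hne, if_neg (by simp [hfix])]

variable [Fintype Γ]

lemma orderOf_conj_perm (h t : Equiv.Perm Γ) : orderOf (t * h * t⁻¹) = orderOf h := by
  have hsc : SemiconjBy t h (t * h * t⁻¹) := by unfold SemiconjBy; group
  exact (hsc.orderOf_eq t).symm

lemma conj_perm_pow_apply (h t : Equiv.Perm Γ) (j : ℕ) (δ : Γ) :
    ((t * h * t⁻¹) ^ j) (t δ) = t ((h ^ j) δ) := by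
  rw [conj_pow]
  simp [Equiv.Perm.mul_apply]

lemma conj_perm_apply (h t : Equiv.Perm Γ) (δ : Γ) :
    (t * h * t⁻¹) (t δ) = t (h δ) := by
  simp [Equiv.Perm.mul_apply]

/-- The yade of the element constructed by `Bmap` is the prescribed value `x`. -/
lemma yade_Bmap {h : Equiv.Perm Γ} (hcyc : h.IsCycle) {γ₀ : Γ} (hγ₀ : h γ₀ ≠ γ₀)
    (t : Equiv.Perm Γ) {g : Equiv.Perm Γ} (hg : g = t * h * t⁻¹)
    (x : K) (d : Γ → K) :
    yade (Wr.mk (Bmap g (t γ₀) x (fun γ => d (t⁻¹ γ))) g) (t γ₀) = x := by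
  set n := orderOf h with hn
  have hnpos : 0 < n := orderOf_pos h
  have hordg : orderOf g = n := by rw [hg]; exact orderOf_conj_perm h t
  have hgpow : ∀ j : ℕ, (g ^ j) (t γ₀) = t ((h ^ j) γ₀) := by
    intro j; rw [hg]; exact conj_perm_pow_apply h t j γ₀
  set d' : Γ → K := fun γ => d (t⁻¹ γ) with hd'
  have hP : ((List.range (orderOf g - 1)).map fun i => d' ((g ^ (i + 1)) (t γ₀))).prod
      = ((List.range (n - 1)).map fun i => d ((h ^ (i + 1)) γ₀)).prod := by
    rw [hordg]
    refine congrArg List.prod (List.map_congr_left fun i _ => ?_)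
    rw [hgpow (i + 1), hd']
    simp
  have hb : ∀ j, 0 < j → j < n →
      Bmap g (t γ₀) x d' ((g ^ j) (t γ₀)) = d ((h ^ j) γ₀) := by
    intro j hj0 hjn
    rw [hgpow j]
    have h1 : t ((h ^ j) γ₀) ≠ t γ₀ :=
      fun hc => pow_ne_self hcyc hγ₀ hj0 hjn (t.injective hc)
    have h2 : g (t ((h ^ j) γ₀)) ≠ t ((h ^ j) γ₀) := by
      rw [hg, conj_perm_apply]
      exact fun hc => apply_pow_ne hγ₀ j (t.injective hc)
    rw [Bmap_apply_move x d' h1 h2, hd']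
    simp
  rw [yade]
  rw [show (Wr.mk (Bmap g (t γ₀) x d') g).top = g from rfl, hordg]
  rw [show (Wr.mk (Bmap g (t γ₀) x d') g).base = Bmap g (t γ₀) x d' from rfl]
  rw [head_prod _ n hnpos.ne']
  have h0 : Bmap g (t γ₀) x d' ((g ^ 0) (t γ₀)) = x *
      (((List.range (n - 1)).map fun i => d ((h ^ (i + 1)) γ₀)).prod)⁻¹ := by
    rw [pow_zero]
    rw [show ((1 : Equiv.Perm Γ) (t γ₀)) = t γ₀ from rfl]
    rw [Bmap_apply_self, hP]
  rw [h0]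
  have htail : ((List.range (n - 1)).map fun i =>
      Bmap g (t γ₀) x d' ((g ^ (i + 1)) (t γ₀))).prod
      = ((List.range (n - 1)).map fun i => d ((h ^ (i + 1)) γ₀)).prod := by
    refine congrArg List.prod (List.map_congr_left fun i hi => ?_)
    have hi' : i < n - 1 := List.mem_range.1 hi
    exact hb (i + 1) (Nat.succ_pos i) (by omega)
  rw [htail]
  group

lemma conj_base_eq_one (w a : Wr K Γ)
    (hf1 : ∀ δ, w.top δ = δ → w.base δ = 1) (γ : Γ)
    (hfix : (a⁻¹ * w * a).top γ = γ) : (a⁻¹ * w * a).base γ = 1 := by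
  have h1 : w.top (a.top⁻¹ γ) = a.top⁻¹ γ := by
    rw [conj_top] at hfix
    apply a.top.injective
    simpa [Equiv.Perm.mul_apply] using hfix
  rw [conj_base, h1, hf1 _ h1]
  simp

end Wr

end Helpers5
section Helpers6

namespace Wr

lemma card_supported {K Γ : Type*} [Group K] [Fintype K] [Fintype Γ] (S : Set Γ) :
    Nat.card ({d : Γ → K | ∀ γ ∉ S, d γ = 1}) = Fintype.card K ^ S.ncard := by
  classical
  have e : {d : Γ → K | ∀ γ ∉ S, d γ = 1} ≃ (S → K) :=
    { toFun := fun d γ => d.1 γ.1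
      invFun := fun c => ⟨fun γ => if hγ : γ ∈ S then c ⟨γ, hγ⟩ else 1,
        fun γ hγ => dif_neg hγ⟩
      left_inv := by
        intro d
        apply Subtype.ext
        funext γ
        by_cases hγ : γ ∈ S
        · simp [hγ]
        · simp [hγ, d.2 γ hγ]
      right_inv := by
        intro c
        funext γ
        simp [γ.2] }
  rw [Nat.card_congr e, Nat.card_fun, Nat.card_eq_fintype_card, Nat.card_coe_set_eq]

end Wr

end Helpers6
/-- for a wreath cycle `w = (f,h)` with `h ≠ 1` and `γ₀ ∈ terr w`,
the map `(h^t, x, d) ↦ ([h^t, γ₀^t, x, d^t]B, h^t)` (for any choice `T` of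
conjugating elements) is a bijection from
`h^H × ([γ₀,w]Yade)^K × K^{terr(w)\{γ₀}}` onto the `W`-conjugacy class of `w`;
in particular `|w^W| = |h^H| · |([γ₀,w]Yade)^K| · |K|^{|h|-1}`. -/
theorem bijOn_conjClass_wreathCycle {K Γ : Type*} [Group K] [Fintype K] [Fintype Γ]
    [DecidableEq Γ] (H : Subgroup (Equiv.Perm Γ)) (w : Wr K Γ)
    (hw : IsWreathCycle w) (hwH : w.top ∈ H) (hh : w.top ≠ 1)
    (γ₀ : Γ) (hγ₀ : γ₀ ∈ terr w)
    (T : Equiv.Perm Γ → Equiv.Perm Γ)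
    (hT : ∀ g, (∃ t ∈ H, t * w.top * t⁻¹ = g) →
      T g ∈ H ∧ T g * w.top * (T g)⁻¹ = g) :
    Set.BijOn
      (fun p : Equiv.Perm Γ × K × (Γ → K) =>
        Wr.mk (Bmap p.1 (T p.1 γ₀) p.2.1 (fun γ => p.2.2 ((T p.1)⁻¹ γ))) p.1)
      {p : Equiv.Perm Γ × K × (Γ → K) |
        (∃ t ∈ H, t * w.top * t⁻¹ = p.1) ∧ IsConj (yade w γ₀) p.2.1 ∧
          ∀ γ, ¬(γ ∈ terr w ∧ γ ≠ γ₀) → p.2.2 γ = 1}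
      {v : Wr K Γ | ∃ a : Wr K Γ, a.top ∈ H ∧ a⁻¹ * w * a = v} ∧
    {v : Wr K Γ | ∃ a : Wr K Γ, a.top ∈ H ∧ a⁻¹ * w * a = v}.ncard =
      {g : Equiv.Perm Γ | ∃ t ∈ H, t * w.top * t⁻¹ = g}.ncard *
        {x : K | IsConj (yade w γ₀) x}.ncard *
        Fintype.card K ^ (orderOf w.top - 1) := by
  classical
  obtain ⟨hcyc, hterr⟩ : w.top.IsCycle ∧ terr w = psupp w.top := by
    rcases hw with ⟨h1, -⟩ | h1
    · exact absurd h1 hh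
    · exact h1
  have hγ₀' : w.top γ₀ ≠ γ₀ := by rw [hterr] at hγ₀; exact hγ₀
  have hf1 : ∀ δ, w.top δ = δ → w.base δ = 1 := by
    intro δ hδ
    by_contra hb
    have hmem : δ ∈ terr w := Or.inr hb
    rw [hterr] at hmem
    exact hmem hδ
  have hmapsTo : Set.MapsTo (fun p : Equiv.Perm Γ × K × (Γ → K) =>
        Wr.mk (Bmap p.1 (T p.1 γ₀) p.2.1 (fun γ => p.2.2 ((T p.1)⁻¹ γ))) p.1)
      {p : Equiv.Perm Γ × K × (Γ → K) |
        (∃ t ∈ H, t * w.top * t⁻¹ = p.1) ∧ IsConj (yade w γ₀) p.2.1 ∧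
          ∀ γ, ¬(γ ∈ terr w ∧ γ ≠ γ₀) → p.2.2 γ = 1}
      {v : Wr K Γ | ∃ a : Wr K Γ, a.top ∈ H ∧ a⁻¹ * w * a = v} := by
    rintro ⟨g, x, d⟩ ⟨hg, hx, hd⟩
    replace hg : ∃ t ∈ H, t * w.top * t⁻¹ = g := hg
    replace hx : IsConj (yade w γ₀) x := hx
    replace hd : ∀ γ, ¬(γ ∈ terr w ∧ γ ≠ γ₀) → d γ = 1 := hd
    obtain ⟨htH, htc⟩ := hT g hg
    set t := T g with htdef
    set v := Wr.mk (Bmap g (t γ₀) x fun γ => d (t⁻¹ γ)) g with hv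
    obtain ⟨c0, hc0⟩ := isConj_iff.1 hx
    have hyadev : yade v (t γ₀) = x := yade_Bmap hcyc hγ₀' t htc.symm x d
    have hv1 : ∀ δ, w.top δ = δ → v.base (t δ) = 1 := by
      intro δ hδ
      have h1 : t δ ≠ t γ₀ := by
        intro hcon
        rw [t.injective hcon] at hδ
        exact hγ₀' hδ
      have h2 : g (t δ) = t δ := by rw [← htc, conj_perm_apply, hδ]
      show Bmap g (t γ₀) x (fun γ => d (t⁻¹ γ)) (t δ) = 1
      exact Bmap_apply_fix x _ h1 h2
    obtain ⟨e, he⟩ := construct w hcyc hf1 γ₀ hγ₀' v t htc.symm hv1 c0⁻¹ (by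
      rw [hyadev, ← hc0]; group)
    exact ⟨Wr.mk e t, htH, he⟩
  have hinj : Set.InjOn (fun p : Equiv.Perm Γ × K × (Γ → K) =>
        Wr.mk (Bmap p.1 (T p.1 γ₀) p.2.1 (fun γ => p.2.2 ((T p.1)⁻¹ γ))) p.1)
      {p : Equiv.Perm Γ × K × (Γ → K) |
        (∃ t ∈ H, t * w.top * t⁻¹ = p.1) ∧ IsConj (yade w γ₀) p.2.1 ∧
          ∀ γ, ¬(γ ∈ terr w ∧ γ ≠ γ₀) → p.2.2 γ = 1} := by
    rintro ⟨g1, x1, d1⟩ ⟨hg1, hx1, hd1⟩ ⟨g2, x2, d2⟩ ⟨hg2, hx2, hd2⟩ heq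
    replace hg1 : ∃ t ∈ H, t * w.top * t⁻¹ = g1 := hg1
    replace hd1 : ∀ γ, ¬(γ ∈ terr w ∧ γ ≠ γ₀) → d1 γ = 1 := hd1
    replace hd2 : ∀ γ, ¬(γ ∈ terr w ∧ γ ≠ γ₀) → d2 γ = 1 := hd2
    simp only at heq
    have htopEq : g1 = g2 := congrArg Wr.top heq
    subst htopEq
    have hbase := congrArg Wr.base heq
    simp only at hbase
    obtain ⟨htH, htc⟩ := hT g1 hg1
    set t := T g1 with htdef
    have hd : d1 = d2 := by
      funext γ
      by_cases hγ : γ ∈ terr w ∧ γ ≠ γ₀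
      · have hγs : w.top γ ≠ γ := by
          have := hγ.1
          rw [hterr] at this
          exact this
        have h1 : t γ ≠ t γ₀ := fun hcon => hγ.2 (t.injective hcon)
        have h2 : g1 (t γ) ≠ t γ := by
          rw [← htc, conj_perm_apply]
          exact fun hcon => hγs (t.injective hcon)
        have e1 := congrFun hbase (t γ)
        rw [Bmap_apply_move x1 _ h1 h2, Bmap_apply_move x2 _ h1 h2] at e1
        simpa using e1
      · rw [hd1 γ hγ, hd2 γ hγ]
    subst hd
    have e0 := congrFun hbase (t γ₀)
    rw [Bmap_apply_self, Bmap_apply_self] at e0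
    have hx : x1 = x2 := mul_right_cancel e0
    subst hx
    rfl
  have hsurj : Set.SurjOn (fun p : Equiv.Perm Γ × K × (Γ → K) =>
        Wr.mk (Bmap p.1 (T p.1 γ₀) p.2.1 (fun γ => p.2.2 ((T p.1)⁻¹ γ))) p.1)
      {p : Equiv.Perm Γ × K × (Γ → K) |
        (∃ t ∈ H, t * w.top * t⁻¹ = p.1) ∧ IsConj (yade w γ₀) p.2.1 ∧
          ∀ γ, ¬(γ ∈ terr w ∧ γ ≠ γ₀) → p.2.2 γ = 1}
      {v : Wr K Γ | ∃ a : Wr K Γ, a.top ∈ H ∧ a⁻¹ * w * a = v} := by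
    rintro v ⟨a, haH, hav⟩
    have hgtop : v.top = a.top * w.top * a.top⁻¹ := by rw [← hav, conj_top]
    have hgexists : ∃ t ∈ H, t * w.top * t⁻¹ = v.top := ⟨a.top, haH, hgtop.symm⟩
    obtain ⟨htH, htc⟩ := hT v.top hgexists
    set t := T v.top with htdef
    set d : Γ → K := fun γ => if γ ∈ terr w ∧ γ ≠ γ₀ then v.base (t γ) else 1 with hdd
    have hm2 : v.top (t γ₀) ≠ t γ₀ := by
      rw [← htc, conj_perm_apply]
      exact fun hc => hγ₀' (t.injective hc)
    have hconjx : IsConj (yade w γ₀) (yade v (t γ₀)) := by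
      have hyc1 : IsConj (yade w γ₀) (yade v (a.top γ₀)) := by
        rw [← hav, yade_conj, isConj_iff]
        exact ⟨(a.base γ₀)⁻¹, by group⟩
      have hvcyc : v.top.IsCycle := by rw [hgtop]; exact hcyc.conj
      have hm1 : v.top (a.top γ₀) ≠ a.top γ₀ := by
        rw [hgtop, conj_perm_apply]
        exact fun hc => hγ₀' (a.top.injective hc)
      obtain ⟨m, hm⟩ := hvcyc.exists_pow_eq hm1 hm2
      have hyc2 : IsConj (yade v (a.top γ₀)) (yade v (t γ₀)) := by
        rw [← hm]
        exact yade_isConj_pow v (a.top γ₀) m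
      exact hyc1.trans hyc2
    refine ⟨(v.top, yade v (t γ₀), d), ⟨hgexists, hconjx, fun γ hγ => if_neg hγ⟩, ?_⟩
    simp only
    apply ext'
    · funext γ
      show Bmap v.top (t γ₀) (yade v (t γ₀)) (fun γ => d (t⁻¹ γ)) γ = v.base γ
      by_cases hfix : v.top γ = γ
      · have h1 : γ ≠ t γ₀ := by
          intro hcon
          rw [hcon] at hfix
          exact hm2 hfix
        have hb0 : v.base γ = 1 := by
          rw [← hav]
          exact conj_base_eq_one w a hf1 γ (by rw [hav]; exact hfix)
        rw [Bmap_apply_fix _ _ h1 hfix, hb0]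
      · by_cases hEq : γ = t γ₀
        · subst hEq
          rw [Bmap_apply_self]
          have hordv : orderOf v.top = orderOf w.top := by
            rw [hgtop]
            exact orderOf_conj_perm _ _
          have hvpow : ∀ j : ℕ, (v.top ^ j) (t γ₀) = t ((w.top ^ j) γ₀) := by
            intro j
            rw [← htc]
            exact conj_perm_pow_apply _ _ j _
          have hnpos : 0 < orderOf w.top := orderOf_pos w.top
          have hPd : ((List.range (orderOf v.top - 1)).map fun i =>
              d (t⁻¹ ((v.top ^ (i + 1)) (t γ₀)))).prod
              = ((List.range (orderOf w.top - 1)).map fun i =>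
                v.base ((v.top ^ (i + 1)) (t γ₀))).prod := by
            rw [hordv]
            refine congrArg List.prod (List.map_congr_left fun i hi => ?_)
            have hi' : i < orderOf w.top - 1 := List.mem_range.1 hi
            rw [hvpow (i + 1)]
            have hcond : ((w.top ^ (i + 1)) γ₀) ∈ terr w ∧ ((w.top ^ (i + 1)) γ₀) ≠ γ₀ := by
              constructor
              · rw [hterr]
                exact apply_pow_ne hγ₀' (i + 1)
              · exact pow_ne_self hcyc hγ₀' (Nat.succ_pos i) (by omega)
            simp only [Equiv.Perm.inv_apply_self]
            rw [hdd]
            simp only [if_pos hcond]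
          have hyadeEq : yade v (t γ₀) = v.base (t γ₀) *
              ((List.range (orderOf w.top - 1)).map fun i =>
                v.base ((v.top ^ (i + 1)) (t γ₀))).prod := by
            rw [yade, hordv, head_prod _ _ hnpos.ne']
            congr 1
          rw [hPd, hyadeEq]
          group
        · rw [Bmap_apply_move _ _ hEq hfix]
          have h3 : w.top (t⁻¹ γ) ≠ t⁻¹ γ := by
            intro hcon
            apply hfix
            have : v.top (t (t⁻¹ γ)) = t (w.top (t⁻¹ γ)) := by
              rw [← htc]; exact conj_perm_apply _ _ _
            rw [Equiv.Perm.apply_inv_self] at this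
            rw [this, hcon, Equiv.Perm.apply_inv_self]
          have h4 : t⁻¹ γ ≠ γ₀ := by
            intro hcon
            apply hEq
            rw [← hcon, Equiv.Perm.apply_inv_self]
          have hcond : t⁻¹ γ ∈ terr w ∧ t⁻¹ γ ≠ γ₀ := ⟨by rw [hterr]; exact h3, h4⟩
          rw [hdd]
          simp only [if_pos hcond, Equiv.Perm.apply_inv_self]
    · rfl
  refine ⟨⟨hmapsTo, hinj, hsurj⟩, ?_⟩
  have hbij : Set.BijOn (fun p : Equiv.Perm Γ × K × (Γ → K) =>
        Wr.mk (Bmap p.1 (T p.1 γ₀) p.2.1 (fun γ => p.2.2 ((T p.1)⁻¹ γ))) p.1)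
      {p : Equiv.Perm Γ × K × (Γ → K) |
        (∃ t ∈ H, t * w.top * t⁻¹ = p.1) ∧ IsConj (yade w γ₀) p.2.1 ∧
          ∀ γ, ¬(γ ∈ terr w ∧ γ ≠ γ₀) → p.2.2 γ = 1}
      {v : Wr K Γ | ∃ a : Wr K Γ, a.top ∈ H ∧ a⁻¹ * w * a = v} := ⟨hmapsTo, hinj, hsurj⟩
  rw [← hbij.image_eq, Set.ncard_image_of_injOn hinj]
  have hDeq : {p : Equiv.Perm Γ × K × (Γ → K) |
        (∃ t ∈ H, t * w.top * t⁻¹ = p.1) ∧ IsConj (yade w γ₀) p.2.1 ∧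
          ∀ γ, ¬(γ ∈ terr w ∧ γ ≠ γ₀) → p.2.2 γ = 1} =
      ({g : Equiv.Perm Γ | ∃ t ∈ H, t * w.top * t⁻¹ = g}) ×ˢ
        (({x : K | IsConj (yade w γ₀) x}) ×ˢ
          ({d : Γ → K | ∀ γ ∉ (terr w \ {γ₀} : Set Γ), d γ = 1})) := by
    ext ⟨g, x, d⟩
    simp only [Set.mem_setOf_eq, Set.mem_prod, Set.mem_diff, Set.mem_singleton_iff]
  rw [hDeq, ← Nat.card_coe_set_eq, Nat.card_congr (Equiv.Set.prod _ _), Nat.card_prod,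
    Nat.card_congr (Equiv.Set.prod _ _), Nat.card_prod, card_supported,
    Nat.card_coe_set_eq, Nat.card_coe_set_eq]
  have hS : (terr w \ {γ₀} : Set Γ).ncard = orderOf w.top - 1 := by
    rw [Set.ncard_diff_singleton_of_mem hγ₀]
    have h1 : terr w = ↑w.top.support := by
      rw [hterr]
      ext δ
      simp [psupp, Equiv.Perm.mem_support]
    rw [h1, Set.ncard_coe_finset, ← hcyc.orderOf]
  rw [hS, mul_assoc]
end

section
/- Let w = (f,1) ∈ S = K ≀_Γ Sym(Γ) be a wreath cycle with trivial top component and terr(w) = {γ₀}. Then the map (γ₀^t, x) ↦ ([γ₀^t, x]E, 1) is a bijection from the orbit γ₀^H times the K-conjugacy class ([γ₀]f)^K onto the conjugacy class w^W of w in W = K ≀_Γ H, where [δ,x]E ∈ K^Γ takes value x at δ and 1_K elsewhere. -/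
set_option linter.unusedSectionVars false

open Wr


lemma conj_trivialTop {K Γ : Type*} [Group K] (w a : Wr K Γ) (hw : w.top = 1) :
    a⁻¹ * w * a = ⟨fun γ => (a.base (a.top⁻¹ γ))⁻¹ * w.base (a.top⁻¹ γ) * a.base (a.top⁻¹ γ), 1⟩ := by
  apply ext'
  · funext γ
    show (a.base (a.top⁻¹ γ))⁻¹ * w.base (a.top⁻¹ γ) * a.base (w.top (a.top⁻¹ γ)) = _
    rw [hw]; rfl
  · show (a.top⁻¹.trans w.top).trans a.top = 1
    rw [hw]
    ext γ
    simp

/-- for a wreath cycle `w = (f,1)` with `terr w = {γ₀}`, the map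
`(δ, x) ↦ ([δ,x]E, 1)` is a bijection from `γ₀^H × ([γ₀]f)^K` onto the
`W`-conjugacy class of `w`. -/
theorem bijOn_conjClass_trivialTop {K Γ : Type*} [Group K] [Fintype Γ] [DecidableEq Γ]
    (H : Subgroup (Equiv.Perm Γ)) (w : Wr K Γ) (γ₀ : Γ)
    (hw : w.top = 1) (ht : terr w = {γ₀}) :
    Set.BijOn
      (fun p : Γ × K => Wr.mk (fun γ => if γ = p.1 then p.2 else 1) 1)
      {p : Γ × K | (∃ t ∈ H, t γ₀ = p.1) ∧ IsConj (w.base γ₀) p.2}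
      {v : Wr K Γ | ∃ a : Wr K Γ, a.top ∈ H ∧ a⁻¹ * w * a = v} := by
  have hf : w.base γ₀ ≠ 1 := by
    have hm : γ₀ ∈ terr w := by rw [ht]; exact rfl
    rcases hm with h | h
    · simp [psupp, hw] at h
    · exact h
  have hzero : ∀ γ, γ ≠ γ₀ → w.base γ = 1 := by
    intro γ hγ
    by_contra hne
    have : γ ∈ terr w := Or.inr hne
    rw [ht] at this
    exact hγ this
  refine ⟨?_, ?_, ?_⟩
  · rintro ⟨δ, x⟩ ⟨⟨t, htH, htγ⟩, hconj⟩
    obtain ⟨c, hc⟩ := isConj_iff.mp hconj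
    simp only at htγ hc
    refine ⟨⟨fun _ => c⁻¹, t⟩, htH, ?_⟩
    rw [conj_trivialTop w _ hw]
    apply ext'
    · funext γ
      show (c⁻¹)⁻¹ * w.base (t⁻¹ γ) * c⁻¹ = if γ = δ then x else 1
      by_cases hγ : γ = δ
      · have h1 : (t⁻¹ : Equiv.Perm Γ) γ = γ₀ := by rw [hγ, ← htγ]; simp
        rw [h1, if_pos hγ, inv_inv]; exact hc
      · have h1 : (t⁻¹ : Equiv.Perm Γ) γ ≠ γ₀ := by
          intro h
          apply hγ
          rw [← htγ, ← h]; simp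
        rw [hzero _ h1, if_neg hγ]; simp
    · rfl
  · rintro ⟨δ₁, x₁⟩ ⟨⟨t₁, _, _⟩, hc₁⟩ ⟨δ₂, x₂⟩ ⟨⟨t₂, _, _⟩, hc₂⟩ heq
    have hb := congrArg Wr.base heq
    simp only at hb
    have h1 := congrFun hb δ₁
    have hx₁ : x₁ ≠ 1 := by
      intro h
      obtain ⟨c, hc⟩ := isConj_iff.mp hc₁
      rw [h] at hc
      apply hf
      have := congrArg (fun y => c⁻¹ * y * c) hc
      simpa [mul_assoc] using this
    by_cases hδ : δ₁ = δ₂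
    · subst hδ
      simp at h1
      simp [Prod.ext_iff, h1]
    · simp [hδ] at h1
      exact absurd h1 hx₁
  · rintro v ⟨a, haH, rfl⟩
    rw [conj_trivialTop w a hw]
    refine ⟨⟨a.top γ₀, (a.base γ₀)⁻¹ * w.base γ₀ * a.base γ₀⟩, ⟨⟨a.top, haH, rfl⟩, ?_⟩, ?_⟩
    · exact isConj_iff.mpr ⟨(a.base γ₀)⁻¹, by group⟩
    · apply ext'
      · funext γ
        show (if γ = a.top γ₀ then _ else 1) = _
        by_cases hγ : γ = a.top γ₀
        · have : a.top⁻¹ γ = γ₀ := by rw [hγ]; simp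
          simp [hγ, this]
        · have hne : a.top⁻¹ γ ≠ γ₀ := by
            intro h; apply hγ; rw [← h]; simp
          simp only [if_neg hγ, hzero _ hne, mul_one, inv_mul_cancel]
      · rfl
end

section
/- Let w = w_1 ⋯ w_ℓ ∈ S = K ≀_Γ Sym(Γ) be a disjoint wreath cycle decomposition. Then there exists an element a in the base group K^Γ × {1} such that w^a = w_1^a ⋯ w_ℓ^a and each w_i^a is a sparse wreath cycle, i.e., a wreath cycle whose base component is trivial in all but at most one point of Γ. -/
set_option linter.unusedSectionVars false

open Wr

attribute [local instance] Classical.propDecidable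

namespace WrSparse

variable {K Γ : Type*} [Group K]

lemma mul_base (w v : Wr K Γ) (γ : Γ) : (w * v).base γ = w.base γ * v.base (w.top γ) := rfl
lemma mul_top (w v : Wr K Γ) : (w * v).top = w.top.trans v.top := rfl
lemma inv_base (w : Wr K Γ) (γ : Γ) : (w⁻¹).base γ = (w.base (w.top⁻¹ γ))⁻¹ := rfl
lemma inv_top (w : Wr K Γ) : (w⁻¹).top = w.top⁻¹ := rfl

lemma conj_base (a z : Wr K Γ) (ha : a.top = 1) (γ : Γ) :
    (a⁻¹ * z * a).base γ = (a.base γ)⁻¹ * z.base γ * a.base (z.top γ) := by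
  simp [mul_base, inv_base, mul_top, inv_top, ha]

lemma conj_top (a z : Wr K Γ) (ha : a.top = 1) : (a⁻¹ * z * a).top = z.top := by
  ext γ; simp [mul_top, inv_top, ha]

lemma conj_prod (a : Wr K Γ) (l : List (Wr K Γ)) :
    a⁻¹ * l.prod * a = (l.map fun z => a⁻¹ * z * a).prod := by
  induction l with
  | nil => simp
  | cons z t ih =>
    simp only [List.prod_cons, List.map_cons]
    rw [← ih]; group

/-- partial products along the orbit -/
noncomputable def pp (z : Wr K Γ) (γ₀ : Γ) (n : ℕ) : K :=
  ((List.range n).map fun j => z.base ((z.top ^ j) γ₀)).prod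

lemma pp_succ (z : Wr K Γ) (γ₀ : Γ) (n : ℕ) :
    pp z γ₀ (n + 1) = pp z γ₀ n * z.base ((z.top ^ n) γ₀) := by
  simp [pp, List.range_succ]

/-- the conjugating base value at `γ` for the cycle `z` -/
noncomputable def A (z : Wr K Γ) (γ : Γ) : K :=
  if h : ∃ δ, z.top δ ≠ δ then
    if hγ : ∃ i : ℕ, (z.top ^ i) h.choose = γ then (pp z h.choose (Nat.find hγ))⁻¹ else 1
  else 1

lemma pow_comm_apply (f : Equiv.Perm Γ) (i : ℕ) (x : Γ) :
    f ((f ^ i) x) = (f ^ i) (f x) := by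
  rw [← Equiv.Perm.mul_apply, ← Equiv.Perm.mul_apply, ← pow_succ, ← pow_succ']

lemma orbit_moved {z : Wr K Γ} {γ₀ : Γ} (h0 : z.top γ₀ ≠ γ₀) (i : ℕ) :
    z.top ((z.top ^ i) γ₀) ≠ (z.top ^ i) γ₀ := by
  rw [pow_comm_apply]
  intro hEq
  exact h0 ((z.top ^ i).injective hEq)

lemma A_one_of_fixed {z : Wr K Γ} {γ : Γ} (hγ : z.top γ = γ) : A z γ = 1 := by
  unfold A
  split_ifs with h hh
  · obtain ⟨i, rfl⟩ := hh
    exact absurd hγ (orbit_moved h.choose_spec i)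
  · rfl
  · rfl

lemma A_base {z : Wr K Γ} (h : ∃ δ, z.top δ ≠ δ) : A z h.choose = 1 := by
  have hex : ∃ i : ℕ, (z.top ^ i) h.choose = h.choose := ⟨0, by simp⟩
  unfold A
  rw [dif_pos h, dif_pos hex]
  have : Nat.find hex = 0 := Nat.find_eq_zero hex |>.mpr (by simp)
  simp [this, pp]

lemma A_step [Fintype Γ] {z : Wr K Γ} (hcyc : z.top.IsCycle) (h : ∃ δ, z.top δ ≠ δ)
    {γ : Γ} (hγ : z.top γ ≠ γ) (hne : z.top γ ≠ h.choose) :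
    A z (z.top γ) = (z.base γ)⁻¹ * A z γ := by
  have h0 : z.top h.choose ≠ h.choose := h.choose_spec
  have hex : ∃ i : ℕ, (z.top ^ i) h.choose = γ := hcyc.exists_pow_eq h0 hγ
  have hγ' : z.top (z.top γ) ≠ z.top γ := fun e => hγ (z.top.injective e)
  have hex' : ∃ i : ℕ, (z.top ^ i) h.choose = z.top γ :=
    ⟨Nat.find hex + 1, by rw [pow_succ', Equiv.Perm.mul_apply, Nat.find_spec hex]⟩
  have hfind : Nat.find hex' = Nat.find hex + 1 := by
    apply le_antisymm
    · exact Nat.find_le (by rw [pow_succ', Equiv.Perm.mul_apply, Nat.find_spec hex])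
    · have hspec := Nat.find_spec hex'
      rcases Nat.eq_zero_or_pos (Nat.find hex') with h0' | hpos
      · rw [h0'] at hspec; simp at hspec; exact absurd hspec.symm hne
      · obtain ⟨k, hk⟩ : ∃ k, Nat.find hex' = k + 1 := ⟨Nat.find hex' - 1, by omega⟩
        rw [hk] at hspec
        rw [pow_succ', Equiv.Perm.mul_apply] at hspec
        have hkγ : (z.top ^ k) h.choose = γ := z.top.injective hspec
        have := Nat.find_min' hex hkγ
        omega
  unfold A
  rw [dif_pos h, dif_pos hex', dif_pos h, dif_pos hex, hfind, pp_succ, Nat.find_spec hex,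
    mul_inv_rev]

lemma A_one_of_not_terr {v : Wr K Γ} (hc : IsWreathCycle v) {γ : Γ} (hγ : γ ∉ terr v) :
    A v γ = 1 := by
  rcases hc with ⟨ht, _⟩ | ⟨hcyc, hterr⟩
  · unfold A
    rw [dif_neg]
    push_neg
    intro δ
    rw [ht]; rfl
  · apply A_one_of_fixed
    by_contra hmoved
    exact hγ (Set.mem_union_left _ hmoved)

lemma base_eq_one_of_not_terr {z : Wr K Γ} {γ : Γ} (hγ : γ ∉ terr z) : z.base γ = 1 := by
  by_contra hb
  exact hγ (Set.mem_union_right _ hb)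

lemma top_fixed_of_not_terr {z : Wr K Γ} {γ : Γ} (hγ : γ ∉ terr z) : z.top γ = γ := by
  by_contra hb
  exact hγ (Set.mem_union_left _ hb)

lemma sparse_conj [Fintype Γ] (a z : Wr K Γ) (ha : a.top = 1) (hz : IsWreathCycle z)
    (H : ∀ γ ∈ terr z, a.base γ = A z γ) :
    IsWreathCycle (a⁻¹ * z * a) ∧ ∃ γ₀ : Γ, ∀ γ : Γ, γ ≠ γ₀ → (a⁻¹ * z * a).base γ = 1 := by
  have hconjtop : (a⁻¹ * z * a).top = z.top := conj_top a z ha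
  rcases hz with ⟨ht, γ₁, hterr⟩ | ⟨hcyc, hterr⟩
  · -- trivial top
    have hfix : ∀ γ, z.top γ = γ := fun γ => by rw [ht]; rfl
    have hbase : ∀ γ, (a⁻¹ * z * a).base γ = (a.base γ)⁻¹ * z.base γ * a.base γ := fun γ => by
      rw [conj_base a z ha, hfix]
    have hbiff : ∀ γ, (a⁻¹ * z * a).base γ = 1 ↔ z.base γ = 1 := by
      intro γ
      rw [hbase]
      constructor
      · intro hh
        have := congrArg (fun t => a.base γ * t * (a.base γ)⁻¹) hh
        simpa [mul_assoc] using this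
      · intro hh; simp [hh]
    have hsparse : ∀ γ : Γ, γ ≠ γ₁ → (a⁻¹ * z * a).base γ = 1 := by
      intro γ hγ
      rw [hbiff]
      apply base_eq_one_of_not_terr (z := z)
      rw [hterr]; exact hγ
    have hmem : ∀ γ, z.base γ ≠ 1 ↔ γ = γ₁ := by
      intro γ
      constructor
      · intro hb
        have : γ ∈ terr z := Set.mem_union_right _ hb
        rw [hterr] at this; exact this
      · rintro rfl
        have : γ ∈ terr z := by rw [hterr]; rfl
        rcases this with hmoved | hb
        · exact absurd (hfix γ) hmoved
        · exact hb
    refine ⟨Or.inl ⟨by rw [hconjtop, ht], γ₁, ?_⟩, γ₁, hsparse⟩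
    ext γ
    simp only [terr, psupp, hconjtop, ht, Set.mem_union, Set.mem_setOf_eq,
      Set.mem_singleton_iff, Equiv.Perm.coe_one, id_eq, ne_eq, not_true_eq_false, false_or]
    rw [hbiff]
    exact hmem γ
  · -- cycle case
    have h : ∃ δ, z.top δ ≠ δ := by
      obtain ⟨x, hx, -⟩ := hcyc; exact ⟨x, hx⟩
    have h0 : z.top h.choose ≠ h.choose := h.choose_spec
    set γL : Γ := z.top⁻¹ h.choose with hγL
    have hγLmoved : z.top γL ≠ γL := by
      rw [hγL, ← Equiv.Perm.mul_apply, mul_inv_cancel, Equiv.Perm.one_apply]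
      intro e
      exact h0 (by conv_lhs => rw [e, ← Equiv.Perm.mul_apply, mul_inv_cancel, Equiv.Perm.one_apply])
    have hsparse : ∀ γ : Γ, γ ≠ γL → (a⁻¹ * z * a).base γ = 1 := by
      intro γ hγ
      rw [conj_base a z ha]
      by_cases hfix : z.top γ = γ
      · have hnot : γ ∉ terr z := by
          rw [hterr]; exact fun hh => hh hfix
        rw [base_eq_one_of_not_terr hnot, hfix]
        simp
      · have hmem : γ ∈ terr z := by rw [hterr]; exact hfix
        have hmem' : z.top γ ∈ terr z := by
          rw [hterr]; exact fun e => hfix (z.top.injective e)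
        have hne : z.top γ ≠ h.choose := by
          intro e
          exact hγ (by rw [hγL, ← e, ← Equiv.Perm.mul_apply, inv_mul_cancel, Equiv.Perm.one_apply])
        rw [H γ hmem, H _ hmem', A_step hcyc h hfix hne]
        group
    refine ⟨Or.inr ⟨by rw [hconjtop]; exact hcyc, ?_⟩, γL, hsparse⟩
    ext γ
    simp only [terr, psupp, hconjtop, Set.mem_union, Set.mem_setOf_eq]
    constructor
    · rintro (hmoved | hb)
      · exact hmoved
      · by_cases hγ : γ = γL
        · rw [hγ]; exact hγLmoved
        · exact absurd (hsparse γ hγ) hb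
    · intro hmoved; exact Or.inl hmoved

lemma prod_A {l : List (Wr K Γ)} (hc : ∀ z ∈ l, IsWreathCycle z)
    (hd : l.Pairwise fun z v => Disjoint (terr z) (terr v))
    {z : Wr K Γ} (hz : z ∈ l) {γ : Γ} (hγ : γ ∈ terr z) :
    (l.map fun v => A v γ).prod = A z γ := by
  induction l with
  | nil => cases hz
  | cons v t ih =>
    rw [List.pairwise_cons] at hd
    simp only [List.map_cons, List.prod_cons]
    rcases List.mem_cons.mp hz with rfl | hzt
    · have : (t.map fun u => A u γ).prod = 1 := by
        apply List.prod_eq_one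
        intro x hx
        obtain ⟨u, hu, rfl⟩ := List.mem_map.mp hx
        exact A_one_of_not_terr (hc u (List.mem_cons_of_mem _ hu))
          (Set.disjoint_left.mp (hd.1 u hu) hγ)
      rw [this, mul_one]
    · have hv : A v γ = 1 :=
        A_one_of_not_terr (hc v (List.mem_cons_self))
          (Set.disjoint_right.mp (hd.1 z hzt) hγ)
      rw [hv, one_mul]
      exact ih (fun u hu => hc u (List.mem_cons_of_mem _ hu)) hd.2 hzt

end WrSparse

open WrSparse

/-- every disjoint wreath cycle decomposition can be conjugated by an
element of the base group into a sparse wreath cycle decomposition. -/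
theorem exists_sparse_decomposition {K Γ : Type*} [Group K] [Fintype Γ]
    (l : List (Wr K Γ))
    (hc : ∀ z ∈ l, IsWreathCycle z)
    (hd : l.Pairwise fun z v => Disjoint (terr z) (terr v)) :
    ∃ a : Wr K Γ, a.top = 1 ∧
      a⁻¹ * l.prod * a = (l.map fun z => a⁻¹ * z * a).prod ∧
      ∀ z ∈ l, IsWreathCycle (a⁻¹ * z * a) ∧
        ∃ γ₀ : Γ, ∀ γ : Γ, γ ≠ γ₀ → (a⁻¹ * z * a).base γ = 1 := by
  refine ⟨⟨fun γ => (l.map fun z => A z γ).prod, 1⟩, rfl, conj_prod _ l, ?_⟩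
  intro z hz
  exact sparse_conj _ z rfl (hc z hz) (fun γ hγ => prod_A hc hd hz hγ)
end
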